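/- The nonstandard face subgroup A^3G^3_N = ⟨⋃_{i∈α_3}( Ȳ_i ∪ ⋃_{j∈α_{456}} Z̄^{j*}_{i,j} ∪ ⋃_{j∈α_3} Z̄^j_{i, j−|α_{12}|} )⟩ of Ker(Φ) is isomorphic, as a group, to (∏_{j∈α_3} A_j) × ∏_{i∈α_3} G_i (that is, to A_{α_3} × G_{α_3}). -/

import Mathlib

namespace SB

/-- `cc n p` is the 0-based boundary of the `p`-th label sequence:
`cc n p = ⌈p·n/3⌉` for `p ≤ 3`, and `cc n p = n + ⌈(p-3)·n/3⌉` for `p ≥ 3`. -/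
def cc (n p : ℕ) : ℕ := if p < 3 then (p * n + 2) / 3 else n + ((p - 3) * n + 2) / 3

/-- The 0-based label sequence `α_{p+1}` (paper's `α_1,…,α_6` for `p = 0,…,5`)
as a finite set of coordinates in `Fin (2n)`. -/
def alphaF (n p : ℕ) : Finset (Fin (2 * n)) :=
  Finset.univ.filter (fun x => cc n p ≤ x.val ∧ x.val < cc n (p + 1))

/-- The 0-based label sequence `α_{t+1}` (for `t < 3`) as a finite set of
indices in `Fin n` (indexing the factors `A_j`). -/
def alphaN (n t : ℕ) : Finset (Fin n) :=
  Finset.univ.filter (fun x => cc n t ≤ x.val ∧ x.val < cc n (t + 1))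

/-- Reduction of a natural number modulo `2n`, as an element of `Fin (2n)`. -/
def idx {n : ℕ} (hn : 0 < n) (k : ℕ) : Fin (2 * n) := ⟨k % (2 * n), Nat.mod_lt _ (by omega)⟩

/-- Reduction of a natural number modulo `n`, as an element of `Fin n`
(this implements the paper's `j*`). -/
def idxN {n : ℕ} (hn : 0 < n) (k : ℕ) : Fin n := ⟨k % n, Nat.mod_lt _ hn⟩

/-- The set `Ȳ_i` of vectorized kernel generators: `y ∈ Y i` placed in
coordinate `i` with identity elsewhere. -/
def Ybar {n : ℕ} {G : Fin (2 * n) → Type} [∀ i, Group (G i)]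
    (Y : ∀ i, Set (G i)) (i : Fin (2 * n)) : Set (∀ i', G i') :=
  Pi.mulSingle i '' (Y i)

/-- The set `Z̄^j_{i,k}` of vectorized section generators: for `b ∈ A j`, the
element with `s j i b` in coordinate `i`, `s j k b⁻¹` in coordinate `k`, and
identity elsewhere. -/
def Zbar {n : ℕ} {A : Fin n → Type} [∀ j, CommGroup (A j)]
    {G : Fin (2 * n) → Type} [∀ i, Group (G i)]
    (s : ∀ (j : Fin n) (i : Fin (2 * n)), A j →* G i)
    (j : Fin n) (i k : Fin (2 * n)) : Set (∀ i', G i') :=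
  Set.range (fun b : A j => Pi.mulSingle i (s j i b) * Pi.mulSingle k (s j k b⁻¹))

private lemma hopf {M : Type*} [CommGroup M] [Module.Finite ℤ (Additive M)]
    (f : M →* M) (hf : Function.Surjective f) : Function.Injective f := by
  have h := IsNoetherian.injective_of_surjective_endomorphism
    ((MonoidHom.toAdditive f).toIntLinearMap) hf
  exact h

private def piAdd {ι : Type*} (A : ι → Type*) [∀ j, CommGroup (A j)] :
    (∀ j, Additive (A j)) ≃+ Additive (∀ j, A j) where
  toFun x := Additive.ofMul (fun j => (x j).toMul)
  invFun x j := Additive.ofMul (x.toMul j)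
  left_inv _ := rfl
  right_inv _ := rfl
  map_add' _ _ := rfl

private lemma finPiFinite {ι : Type*} [Finite ι] (A : ι → Type*) [∀ j, CommGroup (A j)]
    [∀ j, Module.Finite ℤ (Additive (A j))] : Module.Finite ℤ (Additive (∀ j, A j)) :=
  Module.Finite.equiv (piAdd A).toIntLinearEquiv

set_option maxHeartbeats 2000000 in
theorem stmt_8
    (n : ℕ) (hn : 3 ≤ n)
    (A : Fin n → Type) [∀ j, CommGroup (A j)] [∀ j, Nontrivial (A j)]
    [∀ j, Module.Free ℤ (Additive (A j))] [∀ j, Module.Finite ℤ (Additive (A j))]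
    (G : Fin (2 * n) → Type) [∀ i, Group (G i)]
    (φ : ∀ i, G i →* (∀ j, A j)) (hφ : ∀ i, Function.Surjective (φ i))
    (s : ∀ (j : Fin n) (i : Fin (2 * n)), A j →* G i)
    (hs : ∀ j i a, φ i (s j i a) j = a)
    (Φ : (∀ i, G i) →* (∀ j, A j)) (hΦ : ∀ g, Φ g = ∏ i, φ i (g i))
    (Y : ∀ i, Set (G i)) (hYfin : ∀ i, (Y i).Finite)
    (hYker : ∀ i, ∀ y ∈ Y i, φ i y = 1)
    (hYgen : ∀ i, Subgroup.closure (Y i ∪ ⋃ j, Set.range (s j i)) = ⊤)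
    :
    Nonempty
      (↥(Subgroup.closure (⋃ i ∈ alphaF n 2,
            (Ybar Y i
              ∪ (⋃ j ∈ alphaF n 3 ∪ alphaF n 4 ∪ alphaF n 5,
                  Zbar s (idxN (by omega : 0 < n) j.val) i j)
              ∪ ⋃ j ∈ alphaF n 2,
                  Zbar s (idxN (by omega : 0 < n) j.val) i
                    (idx (by omega : 0 < n) (j.val - cc n 2)))))
        ≃* ((∀ j : ↥(alphaN n 2), A j.1) × (∀ i : ↥(alphaF n 2), G i.1))) := by
  classical
  have hn0 : 0 < n := by omega
  have hcc : cc n 2 = (2*n+2)/3 := by norm_num [cc]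
  have hcc3 : cc n 3 = n := by norm_num [cc]
  have hcc4 : cc n 4 = n + (n+2)/3 := by norm_num [cc]
  have hcc5 : cc n 5 = n + (2*n+2)/3 := by norm_num [cc]
  have hcc6 : cc n 6 = 2*n := by norm_num [cc]; omega
  have hle1 : 2*n ≤ 3 * cc n 2 := by rw [hcc]; omega
  have hle2 : 3 * cc n 2 ≤ 2*n + 2 := by rw [hcc]; omega
  -- membership lemmas
  have hm2 : ∀ x : Fin (2*n), x ∈ alphaF n 2 ↔ cc n 2 ≤ x.val ∧ x.val < n := by
    intro x
    simp only [alphaF, Finset.mem_filter, Finset.mem_univ, true_and, hcc3]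
  have hm456 : ∀ x : Fin (2*n), x ∈ alphaF n 3 ∪ alphaF n 4 ∪ alphaF n 5 ↔ n ≤ x.val := by
    intro x; have hx := x.isLt
    simp only [Finset.mem_union, alphaF, Finset.mem_filter, Finset.mem_univ, true_and,
      hcc3, hcc4, hcc5, hcc6, hcc]
    omega
  have hmN2 : ∀ x : Fin n, x ∈ alphaN n 2 ↔ cc n 2 ≤ x.val := by
    intro x; have hx := x.isLt
    simp only [alphaN, Finset.mem_filter, Finset.mem_univ, true_and, hcc3]
    omega
  -- the A-index associated to a coordinate (j*)
  let t0 : Fin (2*n) → Fin n := fun q => idxN hn0 q.val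
  have ht0ge : ∀ q : Fin (2*n), n ≤ q.val → (t0 q).val = q.val - n := by
    intro q hq; have := q.isLt
    show q.val % n = q.val - n
    rw [Nat.mod_eq_sub_mod hq]
    exact Nat.mod_eq_of_lt (by omega)
  have ht0lt : ∀ q : Fin (2*n), q.val < n → (t0 q).val = q.val := by
    intro q hq; exact Nat.mod_eq_of_lt hq
  -- the coordinate associated to an A-index in alphaN 2
  let K : Fin n → Fin (2*n) := fun j => ⟨j.val - cc n 2, by have := j.isLt; omega⟩
  have hKlt : ∀ j : Fin n, (K j).val < n - cc n 2 ∨ (K j).val = 0 := by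
    intro j; have := j.isLt; simp only [K]; omega
  -- the two component maps
  let θ : (∀ i, G i) →* (∀ i : ↥(alphaF n 2), G i.1) :=
    Pi.monoidHom (fun i => Pi.evalMonoidHom G i.1)
  let π : (∀ i, G i) →* (∀ j : ↥(alphaN n 2), A j.1) :=
    Pi.monoidHom (fun j =>
      ((Pi.evalMonoidHom A j.1).comp ((φ (K j.1)).comp (Pi.evalMonoidHom G (K j.1))))⁻¹)
  let F := π.prod θ
  have hFapp : ∀ h, F h =
      ((fun j : ↥(alphaN n 2) => ((φ (K j.1) (h (K j.1))) j.1)⁻¹),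
       (fun i : ↥(alphaF n 2) => h i.1)) := by
    intro h
    refine Prod.ext ?_ rfl
    funext j
    exact MonoidHom.inv_apply _ _
  -- the injective-surjective endomorphisms Ψ i
  let Ψ : ∀ i, (∀ j, A j) →* (∀ j, A j) := fun i =>
    { toFun := fun a => ∏ j, φ i (s j i (a j))
      map_one' := by simp
      map_mul' := by
        intro a b
        show (∏ j, φ i (s j i ((a*b) j))) = (∏ j, φ i (s j i (a j))) * ∏ j, φ i (s j i (b j))
        rw [← Finset.prod_mul_distrib]
        exact Finset.prod_congr rfl (fun j _ => by rw [Pi.mul_apply, map_mul, map_mul])  }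
  have hΨsingle : ∀ i (j : Fin n) (b : A j), Ψ i (Pi.mulSingle j b) = φ i (s j i b) := by
    intro i j b
    show (∏ j', φ i (s j' i (Pi.mulSingle j b j'))) = _
    rw [Fintype.prod_eq_single j (fun x hx => by
      rw [Pi.mulSingle_eq_of_ne hx, map_one, map_one]), Pi.mulSingle_eq_same]
  have hΨsurj : ∀ i, Function.Surjective (Ψ i) := by
    intro i x
    obtain ⟨g, rfl⟩ := hφ i x
    have hg : g ∈ Subgroup.closure (Y i ∪ ⋃ j, Set.range (s j i)) := by
      rw [hYgen i]; trivial
    have : φ i g ∈ (Ψ i).range := by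
      induction hg using Subgroup.closure_induction with
      | mem x hx =>
        rcases hx with hY | hR
        · rw [hYker i x hY]; exact one_mem _
        · simp only [Set.mem_iUnion, Set.mem_range] at hR
          obtain ⟨j, b, rfl⟩ := hR
          exact ⟨Pi.mulSingle j b, hΨsingle i j b⟩
      | one => rw [map_one]; exact one_mem _
      | mul x y _ _ hx hy => rw [map_mul]; exact mul_mem hx hy
      | inv x _ hx => rw [map_inv]; exact inv_mem hx
    exact this
  haveI : Module.Finite ℤ (Additive (∀ j, A j)) := finPiFinite A
  have hΨinj : ∀ i, Function.Injective (Ψ i) := fun i => hopf _ (hΨsurj i)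
  let E : ∀ i, (∀ j, A j) ≃* (∀ j, A j) := fun i =>
    MulEquiv.ofBijective (Ψ i) ⟨hΨinj i, hΨsurj i⟩
  have hinv : ∀ i (j : Fin n) (b : A j),
      (E i).symm (φ i (s j i b)) = Pi.mulSingle j b := by
    intro i j b
    rw [MulEquiv.symm_apply_eq]
    exact (hΨsingle i j b).symm
  -- the correction homomorphisms μ
  let μ : ∀ q : Fin (2*n), (∀ i, G i) →* A (t0 q) := fun q =>
    ((∏ i ∈ alphaF n 2, (Pi.evalMonoidHom A (t0 q)).comp
        (((E i).symm.toMonoidHom).comp ((φ i).comp (Pi.evalMonoidHom G i))))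
      * ((Pi.evalMonoidHom A (t0 q)).comp ((φ q).comp (Pi.evalMonoidHom G q))))
      * (if cc n 2 ≤ (t0 q).val then
          (Pi.evalMonoidHom A (t0 q)).comp
            ((φ (K (t0 q))).comp (Pi.evalMonoidHom G (K (t0 q)))) else 1)
  have hμapp : ∀ (q : Fin (2*n)) (h : ∀ i, G i), μ q h =
      ((∏ i ∈ alphaF n 2, (E i).symm (φ i (h i)) (t0 q))
        * (φ q (h q)) (t0 q))
        * (if cc n 2 ≤ (t0 q).val then (φ (K (t0 q)) (h (K (t0 q)))) (t0 q) else 1) := by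
    intro q h
    simp only [μ]
    rw [MonoidHom.mul_apply, MonoidHom.mul_apply, MonoidHom.finset_prod_apply]
    congr 1
    split_ifs <;> rfl
  -- helpers for two-point supported elements
  have hg2a : ∀ {a b : Fin (2*n)} (x : G a) (y : G b), a ≠ b →
      (Pi.mulSingle a x * Pi.mulSingle b y) a = x := by
    intro a b x y hab
    rw [Pi.mul_apply, Pi.mulSingle_eq_same, Pi.mulSingle_eq_of_ne hab, mul_one]
  have hg2b : ∀ {a b : Fin (2*n)} (x : G a) (y : G b), b ≠ a →
      (Pi.mulSingle a x * Pi.mulSingle b y) b = y := by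
    intro a b x y hba
    rw [Pi.mul_apply, Pi.mulSingle_eq_same, Pi.mulSingle_eq_of_ne hba, one_mul]
  have hg2n : ∀ {a b c : Fin (2*n)} (x : G a) (y : G b), c ≠ a → c ≠ b →
      (Pi.mulSingle a x * Pi.mulSingle b y) c = 1 := by
    intro a b c x y h1 h2
    rw [Pi.mul_apply, Pi.mulSingle_eq_of_ne h1, Pi.mulSingle_eq_of_ne h2, one_mul]
  -- the generating set
  let SS : Set (∀ i, G i) := ⋃ i ∈ alphaF n 2,
      (Ybar Y i
        ∪ (⋃ j ∈ alphaF n 3 ∪ alphaF n 4 ∪ alphaF n 5, Zbar s (t0 j) i j)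
        ∪ ⋃ j ∈ alphaF n 2, Zbar s (t0 j) i (idx hn0 (j.val - cc n 2)))
  have hSSmem : ∀ g, g ∈ SS ↔ ∃ i ∈ alphaF n 2,
      ((g ∈ Ybar Y i ∨
        ∃ j ∈ alphaF n 3 ∪ alphaF n 4 ∪ alphaF n 5, g ∈ Zbar s (t0 j) i j) ∨
        ∃ j ∈ alphaF n 2, g ∈ Zbar s (t0 j) i (idx hn0 (j.val - cc n 2))) := by
    intro g
    simp only [SS, Set.mem_iUnion, Set.mem_union, exists_prop]
  -- the invariant satisfied by the subgroup
  let P : (∀ i, G i) → Prop := fun h =>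
    (∀ c : Fin (2*n), ∀ hc : c.val < n - cc n 2,
        h c ∈ (s ⟨c.val + cc n 2, by omega⟩ c).range) ∧
    (∀ c : Fin (2*n), n - cc n 2 ≤ c.val → c.val < cc n 2 → h c = 1) ∧
    (∀ c : Fin (2*n), n ≤ c.val → h c ∈ (s (t0 c) c).range) ∧
    (∀ q : Fin (2*n), n ≤ q.val → μ q h = 1)
  have hPS : ∀ g ∈ SS, P g := by
    intro g hg
    rw [hSSmem] at hg
    obtain ⟨i, hi, hcase⟩ := hg
    obtain ⟨hi1, hi2⟩ := (hm2 i).1 hi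
    rcases hcase with (hY | ⟨j, hj, hZ⟩) | ⟨j, hj, hZ⟩
    · -- Ybar family
      obtain ⟨y, hy, rfl⟩ := hY
      refine ⟨?_, ?_, ?_, ?_⟩
      · intro c hc
        rw [Pi.mulSingle_eq_of_ne (Fin.ne_of_val_ne (by omega : c.val ≠ i.val))]
        exact one_mem _
      · intro c hc1 hc2
        exact Pi.mulSingle_eq_of_ne (Fin.ne_of_val_ne (by omega : c.val ≠ i.val)) y
      · intro c hc
        rw [Pi.mulSingle_eq_of_ne (Fin.ne_of_val_ne (by omega : c.val ≠ i.val))]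
        exact one_mem _
      · intro q hq
        have hpr : ∀ i' ∈ alphaF n 2, (E i').symm (φ i' (Pi.mulSingle i y i')) (t0 q) = 1 := by
          intro i' hi'
          by_cases hii : i' = i
          · subst hii
            rw [Pi.mulSingle_eq_same, hYker i' y hy, map_one, Pi.one_apply]
          · rw [Pi.mulSingle_eq_of_ne hii, map_one, map_one, Pi.one_apply]
        rw [hμapp, Finset.prod_eq_one hpr,
          Pi.mulSingle_eq_of_ne (Fin.ne_of_val_ne (by omega : q.val ≠ i.val)), map_one,
          Pi.one_apply]
        split_ifs with hcond
        · rw [Pi.mulSingle_eq_of_ne (Fin.ne_of_val_ne (show (K (t0 q)).val ≠ i.val by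
              have := (t0 q).isLt; simp only [K]; omega)), map_one, Pi.one_apply]
          simp
        · simp
    · -- Z456 family
      rw [hm456] at hj
      obtain ⟨b, rfl⟩ := hZ
      have hij : i ≠ j := Fin.ne_of_val_ne (by omega)
      have hji : j ≠ i := Fin.ne_of_val_ne (by omega)
      show P (Pi.mulSingle i (s (t0 j) i b) * Pi.mulSingle j (s (t0 j) j b⁻¹))
      refine ⟨?_, ?_, ?_, ?_⟩
      · intro c hc
        rw [hg2n _ _ (Fin.ne_of_val_ne (by omega : c.val ≠ i.val))
          (Fin.ne_of_val_ne (by omega : c.val ≠ j.val))]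
        exact one_mem _
      · intro c hc1 hc2
        exact hg2n _ _ (Fin.ne_of_val_ne (by omega : c.val ≠ i.val))
          (Fin.ne_of_val_ne (by omega : c.val ≠ j.val))
      · intro c hc
        by_cases hcj : c = j
        · subst hcj
          rw [hg2b _ _ hji]
          exact ⟨b⁻¹, rfl⟩
        · rw [hg2n _ _ (Fin.ne_of_val_ne (by omega : c.val ≠ i.val)) hcj]
          exact one_mem _
      · intro q hq
        have hpr : (∏ i' ∈ alphaF n 2,
            (E i').symm (φ i' ((Pi.mulSingle i (s (t0 j) i b) *
              Pi.mulSingle j (s (t0 j) j b⁻¹)) i')) (t0 q)) = Pi.mulSingle (t0 j) b (t0 q) := by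
          rw [Finset.prod_eq_single_of_mem i hi (by
            intro i' hi' hne
            obtain ⟨h1', h2'⟩ := (hm2 i').1 hi'
            rw [hg2n _ _ hne (Fin.ne_of_val_ne (by omega : i'.val ≠ j.val)), map_one, map_one,
              Pi.one_apply])]
          rw [hg2a _ _ hij, hinv]
        rw [hμapp, hpr]
        have hKi : (K (t0 q)).val ≠ i.val := by have := (t0 q).isLt; simp only [K]; omega
        have hKq : (K (t0 q)).val ≠ q.val := by have := (t0 q).isLt; simp only [K]; omega
        by_cases hqj : q = j
        · subst hqj
          rw [hg2b _ _ hji, Pi.mulSingle_eq_same]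
          have hts : (φ q (s (t0 q) q b⁻¹)) (t0 q) = b⁻¹ := hs _ _ _
          rw [hts]
          split_ifs with hcond
          · rw [hg2n _ _ (Fin.ne_of_val_ne hKi) (Fin.ne_of_val_ne hKq), map_one, Pi.one_apply]
            simp
          · simp
        · have ht0ne : t0 q ≠ t0 j := by
            intro h
            apply hqj
            apply Fin.ext
            have h' := congrArg Fin.val h
            rw [ht0ge q hq, ht0ge j hj] at h'
            have := q.isLt; have := j.isLt
            omega
          rw [Pi.mulSingle_eq_of_ne ht0ne,
            hg2n _ _ (Fin.ne_of_val_ne (by omega : q.val ≠ i.val)) hqj, map_one, Pi.one_apply]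
          split_ifs with hcond
          · rw [hg2n _ _ (Fin.ne_of_val_ne hKi)
              (Fin.ne_of_val_ne (by have := (t0 q).isLt; simp only [K]; omega :
                (K (t0 q)).val ≠ j.val)), map_one, Pi.one_apply]
            simp
          · simp
    · -- Z3 family
      obtain ⟨hj1, hj2⟩ := (hm2 j).1 hj
      obtain ⟨b, rfl⟩ := hZ
      have hkj : (idx hn0 (j.val - cc n 2)).val = j.val - cc n 2 :=
        Nat.mod_eq_of_lt (by omega)
      have hkji : idx hn0 (j.val - cc n 2) ≠ i := Fin.ne_of_val_ne (by omega)
      show P (Pi.mulSingle i (s (t0 j) i b) *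
        Pi.mulSingle (idx hn0 (j.val - cc n 2)) (s (t0 j) (idx hn0 (j.val - cc n 2)) b⁻¹))
      refine ⟨?_, ?_, ?_, ?_⟩
      · intro c hc
        by_cases hck : c = idx hn0 (j.val - cc n 2)
        · subst hck
          have hteq : (⟨(idx hn0 (j.val - cc n 2)).val + cc n 2, by omega⟩ : Fin n) = t0 j := by
            apply Fin.ext
            show (idx hn0 (j.val - cc n 2)).val + cc n 2 = j.val % n
            rw [Nat.mod_eq_of_lt (by omega), hkj]
            omega
          rw [hteq, hg2b _ _ hkji]
          exact ⟨b⁻¹, rfl⟩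
        · rw [hg2n _ _ (Fin.ne_of_val_ne (by omega : c.val ≠ i.val)) hck]
          exact one_mem _
      · intro c hc1 hc2
        exact hg2n _ _ (Fin.ne_of_val_ne (by omega : c.val ≠ i.val))
          (Fin.ne_of_val_ne (by omega : c.val ≠ (idx hn0 (j.val - cc n 2)).val))
      · intro c hc
        rw [hg2n _ _ (Fin.ne_of_val_ne (by omega : c.val ≠ i.val))
          (Fin.ne_of_val_ne (by omega : c.val ≠ (idx hn0 (j.val - cc n 2)).val))]
        exact one_mem _
      · intro q hq
        have ht0j : (t0 j).val = j.val := ht0lt j hj2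
        have hpr : (∏ i' ∈ alphaF n 2,
            (E i').symm (φ i' ((Pi.mulSingle i (s (t0 j) i b) *
              Pi.mulSingle (idx hn0 (j.val - cc n 2)) (s (t0 j) (idx hn0 (j.val - cc n 2)) b⁻¹)) i'))
              (t0 q)) = Pi.mulSingle (t0 j) b (t0 q) := by
          rw [Finset.prod_eq_single_of_mem i hi (by
            intro i' hi' hne
            obtain ⟨h1', h2'⟩ := (hm2 i').1 hi'
            rw [hg2n _ _ hne (Fin.ne_of_val_ne (by omega :
              i'.val ≠ (idx hn0 (j.val - cc n 2)).val)), map_one, map_one, Pi.one_apply])]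
          rw [hg2a _ _ (Ne.symm hkji), hinv]
        rw [hμapp, hpr,
          hg2n _ _ (Fin.ne_of_val_ne (by omega : q.val ≠ i.val))
            (Fin.ne_of_val_ne (by omega : q.val ≠ (idx hn0 (j.val - cc n 2)).val)),
          map_one, Pi.one_apply]
        by_cases hqt : t0 q = t0 j
        · have hcond : cc n 2 ≤ (t0 q).val := by rw [hqt]; omega
          rw [if_pos hcond]
          have hKk : K (t0 q) = idx hn0 (j.val - cc n 2) := by
            apply Fin.ext
            have h' := congrArg Fin.val hqt
            simp only [K]
            omega
          rw [hKk, hg2b _ _ hkji, hqt, Pi.mulSingle_eq_same]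
          have hts : (φ (idx hn0 (j.val - cc n 2)) (s (t0 j) (idx hn0 (j.val - cc n 2)) b⁻¹))
              (t0 j) = b⁻¹ := hs _ _ _
          rw [hts]
          simp
        · rw [Pi.mulSingle_eq_of_ne hqt]
          split_ifs with hcond
          · have hKi : (K (t0 q)).val ≠ i.val := by
              have := (t0 q).isLt; simp only [K]; omega
            have hKk : (K (t0 q)).val ≠ (idx hn0 (j.val - cc n 2)).val := by
              simp only [K]
              intro h
              apply hqt
              apply Fin.ext
              rw [ht0j]
              omega
            rw [hg2n _ _ (Fin.ne_of_val_ne hKi) (Fin.ne_of_val_ne hKk), map_one, Pi.one_apply]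
            simp
          · simp
  have hPH : ∀ g ∈ Subgroup.closure SS, P g := by
    intro g hg
    induction hg using Subgroup.closure_induction with
    | mem x hx => exact hPS x hx
    | one =>
      exact ⟨fun c _ => one_mem _, fun c _ _ => rfl, fun c _ => one_mem _,
        fun q _ => map_one _⟩
    | mul x y _ _ hx hy =>
      exact ⟨fun c hc => mul_mem (hx.1 c hc) (hy.1 c hc),
        fun c h1 h2 => by
          show x c * y c = 1
          rw [hx.2.1 c h1 h2, hy.2.1 c h1 h2, one_mul],
        fun c hc => mul_mem (hx.2.2.1 c hc) (hy.2.2.1 c hc),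
        fun q hq => by rw [map_mul, hx.2.2.2 q hq, hy.2.2.2 q hq, one_mul]⟩
    | inv x _ hx =>
      exact ⟨fun c hc => inv_mem (hx.1 c hc),
        fun c h1 h2 => by show (x c)⁻¹ = 1; rw [hx.2.1 c h1 h2, inv_one],
        fun c hc => inv_mem (hx.2.2.1 c hc),
        fun q hq => by rw [map_inv, hx.2.2.2 q hq, inv_one]⟩
  -- injectivity on the subgroup
  have hker : ∀ g ∈ Subgroup.closure SS, F g = 1 → g = 1 := by
    intro g hg hFg
    obtain ⟨hQ1, hQ2, hQ3, hQ4⟩ := hPH g hg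
    rw [hFapp, Prod.ext_iff] at hFg
    obtain ⟨hπ, hθ⟩ := hFg
    have hg3 : ∀ c : Fin (2*n), cc n 2 ≤ c.val → c.val < n → g c = 1 := by
      intro c h1 h2
      exact congrFun hθ ⟨c, (hm2 c).2 ⟨h1, h2⟩⟩
    have hg1 : ∀ c : Fin (2*n), c.val < n - cc n 2 → g c = 1 := by
      intro c hc
      obtain ⟨a, ha⟩ := hQ1 c hc
      have hjmem : (⟨c.val + cc n 2, by omega⟩ : Fin n) ∈ alphaN n 2 :=
        (hmN2 _).2 (show cc n 2 ≤ c.val + cc n 2 by omega)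
      have h0 := congrFun hπ ⟨⟨c.val + cc n 2, by omega⟩, hjmem⟩
      simp only [Prod.fst_one, Pi.one_apply] at h0
      have hKc : K (⟨c.val + cc n 2, by omega⟩ : Fin n) = c := by
        apply Fin.ext
        show c.val + cc n 2 - cc n 2 = c.val
        omega
      rw [hKc] at h0
      rw [← ha] at h0 ⊢
      rw [hs, inv_eq_one] at h0
      rw [h0, map_one]
    have hg4 : ∀ c : Fin (2*n), n ≤ c.val → g c = 1 := by
      intro c hc
      obtain ⟨a, ha⟩ := hQ3 c hc
      have h0 := hQ4 c hc
      rw [hμapp] at h0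
      rw [Finset.prod_eq_one (fun i' hi' => by
        rw [hg3 i' ((hm2 i').1 hi').1 ((hm2 i').1 hi').2, map_one, map_one, Pi.one_apply])] at h0
      have hKlt' : (K (t0 c)).val < n - cc n 2 := by
        have := (t0 c).isLt; simp only [K]; omega
      rw [hg1 _ hKlt', map_one, Pi.one_apply, ite_self, ← ha, hs, one_mul, mul_one] at h0
      rw [← ha, h0, map_one]
    have : g = 1 := by
      funext c
      rcases (by omega : c.val < n - cc n 2 ∨ (n - cc n 2 ≤ c.val ∧ c.val < cc n 2) ∨
          (cc n 2 ≤ c.val ∧ c.val < n) ∨ n ≤ c.val) with h | ⟨h1, h2⟩ | ⟨h1, h2⟩ | h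
      · exact hg1 c h
      · exact hQ2 c h1 h2
      · exact hg3 c h1 h2
      · exact hg4 c h
    exact this
  -- computations of F on the generators
  have hsub : ∀ (i : Fin (2*n)) (hi : i ∈ alphaF n 2) (x : G i),
      (fun i' : {x // x ∈ alphaF n 2} => Pi.mulSingle i x i'.1)
        = Pi.mulSingle (⟨i, hi⟩ : {x // x ∈ alphaF n 2}) x := by
    intro i hi x
    funext i'
    by_cases h : i' = ⟨i, hi⟩
    · subst h
      show Pi.mulSingle i x i = _
      rw [Pi.mulSingle_eq_same, Pi.mulSingle_eq_same]
    · rw [Pi.mulSingle_eq_of_ne (fun hh => h (Subtype.ext hh)), Pi.mulSingle_eq_of_ne h]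
  have hsub2 : ∀ (i : Fin (2*n)) (hi : i ∈ alphaF n 2) (x : G i) (b' : Fin (2*n)) (y : G b'),
      (∀ i'' : Fin (2*n), i'' ∈ alphaF n 2 → i'' ≠ b') →
      (fun i' : {x // x ∈ alphaF n 2} => (Pi.mulSingle i x * Pi.mulSingle b' y) i'.1)
        = Pi.mulSingle (⟨i, hi⟩ : {x // x ∈ alphaF n 2}) x := by
    intro i hi x b' y hb'
    funext i'
    show (Pi.mulSingle i x * Pi.mulSingle b' y) i'.1 = _
    rw [Pi.mul_apply, Pi.mulSingle_eq_of_ne (hb' i'.1 i'.2), mul_one]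
    exact congrFun (hsub i hi x) i'
  have hFY : ∀ (i : Fin (2*n)) (hi : i ∈ alphaF n 2) (y : G i),
      F (Pi.mulSingle i y) = (1, Pi.mulSingle (⟨i, hi⟩ : {x // x ∈ alphaF n 2}) y) := by
    intro i hi y
    obtain ⟨hi1, hi2⟩ := (hm2 i).1 hi
    rw [hFapp]
    refine Prod.ext ?_ (hsub i hi y)
    funext j'
    have h1' := (hmN2 j'.1).1 j'.2
    have h2' := j'.1.isLt
    have hne : K j'.1 ≠ i := Fin.ne_of_val_ne (by simp only [K]; omega)
    show ((φ (K j'.1) (Pi.mulSingle i y (K j'.1))) j'.1)⁻¹ = _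
    rw [Pi.mulSingle_eq_of_ne hne, map_one, Pi.one_apply, inv_one]
    rfl
  have hFZ456 : ∀ (i : Fin (2*n)) (hi : i ∈ alphaF n 2) (j : Fin (2*n)) (hj : n ≤ j.val)
      (b : A (t0 j)),
      F (Pi.mulSingle i (s (t0 j) i b) * Pi.mulSingle j (s (t0 j) j b⁻¹))
        = (1, Pi.mulSingle (⟨i, hi⟩ : {x // x ∈ alphaF n 2}) (s (t0 j) i b)) := by
    intro i hi j hj b
    obtain ⟨hi1, hi2⟩ := (hm2 i).1 hi
    rw [hFapp]
    refine Prod.ext ?_ (hsub2 i hi _ j _ (fun i'' hi'' => Fin.ne_of_val_ne (by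
      have := ((hm2 i'').1 hi'').2; omega)))
    funext j'
    have h1' := (hmN2 j'.1).1 j'.2
    have h2' := j'.1.isLt
    have hne1 : K j'.1 ≠ i := Fin.ne_of_val_ne (by simp only [K]; omega)
    have hne2 : K j'.1 ≠ j := Fin.ne_of_val_ne (by simp only [K]; omega)
    show ((φ (K j'.1) ((Pi.mulSingle i (s (t0 j) i b) *
        Pi.mulSingle j (s (t0 j) j b⁻¹)) (K j'.1))) j'.1)⁻¹ = _
    rw [hg2n _ _ hne1 hne2, map_one, Pi.one_apply, inv_one]
    rfl
  have hFZ3 : ∀ (i : Fin (2*n)) (hi : i ∈ alphaF n 2) (j : Fin (2*n)) (hj : j ∈ alphaF n 2)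
      (b : A (t0 j)) (hjm : t0 j ∈ alphaN n 2),
      F (Pi.mulSingle i (s (t0 j) i b) *
          Pi.mulSingle (idx hn0 (j.val - cc n 2)) (s (t0 j) (idx hn0 (j.val - cc n 2)) b⁻¹))
        = (Pi.mulSingle (⟨t0 j, hjm⟩ : {x // x ∈ alphaN n 2}) b,
           Pi.mulSingle (⟨i, hi⟩ : {x // x ∈ alphaF n 2}) (s (t0 j) i b)) := by
    intro i hi j hj b hjm
    obtain ⟨hi1, hi2⟩ := (hm2 i).1 hi
    obtain ⟨hj1, hj2⟩ := (hm2 j).1 hj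
    have hkj : (idx hn0 (j.val - cc n 2)).val = j.val - cc n 2 := Nat.mod_eq_of_lt (by omega)
    have ht0j : (t0 j).val = j.val := ht0lt j hj2
    have hki : idx hn0 (j.val - cc n 2) ≠ i := Fin.ne_of_val_ne (by omega)
    rw [hFapp]
    refine Prod.ext ?_ (hsub2 i hi _ _ _ (fun i'' hi'' => Fin.ne_of_val_ne (by
      have := ((hm2 i'').1 hi'').1; omega)))
    funext j'
    have h1' := (hmN2 j'.1).1 j'.2
    have h2' := j'.1.isLt
    have hne1 : K j'.1 ≠ i := Fin.ne_of_val_ne (by simp only [K]; omega)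
    show ((φ (K j'.1) ((Pi.mulSingle i (s (t0 j) i b) *
        Pi.mulSingle (idx hn0 (j.val - cc n 2)) (s (t0 j) (idx hn0 (j.val - cc n 2)) b⁻¹))
          (K j'.1))) j'.1)⁻¹ = _
    by_cases hjj : j' = ⟨t0 j, hjm⟩
    · subst hjj
      dsimp only
      have hKeq : K (t0 j) = idx hn0 (j.val - cc n 2) := by
        apply Fin.ext
        simp only [K]
        omega
      rw [hKeq, hg2b _ _ hki, hs, inv_inv, Pi.mulSingle_eq_same]
    · have hne2 : K j'.1 ≠ idx hn0 (j.val - cc n 2) := by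
        intro hEq
        apply hjj
        apply Subtype.ext
        apply Fin.ext
        have hv := congrArg Fin.val hEq
        simp only [K] at hv
        rw [hkj] at hv
        rw [ht0j]
        omega
      rw [hg2n _ _ hne1 hne2, map_one, Pi.one_apply, inv_one]
      show (1 : A j'.1) =
        @Pi.mulSingle {x // x ∈ alphaN n 2} (fun j'' => A j''.1) _ _ ⟨t0 j, hjm⟩ b j'
      rw [Pi.mulSingle_eq_of_ne hjj]
  -- surjectivity
  have i0mem : (⟨cc n 2, by omega⟩ : Fin (2*n)) ∈ alphaF n 2 :=
    (hm2 _).2 ⟨show cc n 2 ≤ cc n 2 from le_refl _, show cc n 2 < n by omega⟩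
  have hmap : Subgroup.map F (Subgroup.closure SS) = ⊤ := by
    rw [MonoidHom.map_closure, eq_top_iff]
    intro t _
    obtain ⟨a, g⟩ := t
    have hC1a : ∀ (i : Fin (2*n)) (hi : i ∈ alphaF n 2) (jc : Fin (2*n)) (hjc : n ≤ jc.val)
        (b : A (t0 jc)),
        ((1, Pi.mulSingle (⟨i, hi⟩ : {x // x ∈ alphaF n 2}) (s (t0 jc) i b)) :
          (∀ j' : {x // x ∈ alphaN n 2}, A j'.1) × (∀ i' : {x // x ∈ alphaF n 2}, G i'.1))
          ∈ Subgroup.closure (F '' SS) := by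
      intro i hi jc hjc b
      refine Subgroup.subset_closure ⟨_, ?_, hFZ456 i hi jc hjc b⟩
      rw [hSSmem]
      exact ⟨i, hi, Or.inl (Or.inr ⟨jc, (hm456 jc).2 hjc, ⟨b, rfl⟩⟩)⟩
    have hC1 : ∀ (i : Fin (2*n)) (hi : i ∈ alphaF n 2) (x : G i),
        ((1, Pi.mulSingle (⟨i, hi⟩ : {x // x ∈ alphaF n 2}) x) :
          (∀ j' : {x // x ∈ alphaN n 2}, A j'.1) × (∀ i' : {x // x ∈ alphaF n 2}, G i'.1))
          ∈ Subgroup.closure (F '' SS) := by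
      intro i hi x
      have hx : x ∈ Subgroup.closure (Y i ∪ ⋃ j, Set.range (s j i)) := by
        rw [hYgen]; trivial
      induction hx using Subgroup.closure_induction with
      | mem z hz =>
        rcases hz with hzY | hzR
        · refine Subgroup.subset_closure ⟨Pi.mulSingle i z, ?_, hFY i hi z⟩
          rw [hSSmem]
          exact ⟨i, hi, Or.inl (Or.inl ⟨z, hzY, rfl⟩)⟩
        · simp only [Set.mem_iUnion, Set.mem_range] at hzR
          obtain ⟨j, b, rfl⟩ := hzR
          have hjlt := j.isLt
          have ht0c : t0 (⟨j.val + n, by omega⟩ : Fin (2*n)) = j := by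
            apply Fin.ext
            rw [ht0ge _ (show n ≤ j.val + n by omega)]
            show j.val + n - n = j.val
            omega
          revert b
          rw [← ht0c]
          intro b
          exact hC1a i hi _ (show n ≤ j.val + n by omega) b
      | one =>
        rw [Pi.mulSingle_one]
        exact one_mem _
      | mul u v _ _ hu hv =>
        rw [Pi.mulSingle_mul]
        have : ((1, Pi.mulSingle (⟨i, hi⟩ : {x // x ∈ alphaF n 2}) u *
            Pi.mulSingle (⟨i, hi⟩ : {x // x ∈ alphaF n 2}) v) :
            (∀ j' : {x // x ∈ alphaN n 2}, A j'.1) × (∀ i' : {x // x ∈ alphaF n 2}, G i'.1))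
            = (1, Pi.mulSingle (⟨i, hi⟩ : {x // x ∈ alphaF n 2}) u) *
              (1, Pi.mulSingle (⟨i, hi⟩ : {x // x ∈ alphaF n 2}) v) := by
          rw [Prod.mk_mul_mk, one_mul]
        rw [this]
        exact mul_mem hu hv
      | inv u _ hu =>
        rw [Pi.mulSingle_inv]
        have : ((1, (Pi.mulSingle (⟨i, hi⟩ : {x // x ∈ alphaF n 2}) u)⁻¹) :
            (∀ j' : {x // x ∈ alphaN n 2}, A j'.1) × (∀ i' : {x // x ∈ alphaF n 2}, G i'.1))
            = ((1, Pi.mulSingle (⟨i, hi⟩ : {x // x ∈ alphaF n 2}) u))⁻¹ := by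
          rw [Prod.inv_mk, inv_one]
        rw [this]
        exact inv_mem hu
    have hC2 : ∀ (jN : {x // x ∈ alphaN n 2}) (b : A jN.1),
        ((Pi.mulSingle jN b, 1) :
          (∀ j' : {x // x ∈ alphaN n 2}, A j'.1) × (∀ i' : {x // x ∈ alphaF n 2}, G i'.1))
          ∈ Subgroup.closure (F '' SS) := by
      rintro ⟨j1, hj1⟩ b
      have hj1v := (hmN2 j1).1 hj1
      have hj1lt := j1.isLt
      have hjF : (⟨j1.val, by omega⟩ : Fin (2*n)) ∈ alphaF n 2 :=
        (hm2 _).2 ⟨show cc n 2 ≤ j1.val from hj1v, show j1.val < n from hj1lt⟩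
      have ht : t0 (⟨j1.val, by omega⟩ : Fin (2*n)) = j1 :=
        Fin.ext (ht0lt _ (show j1.val < n by omega))
      have hjm : t0 (⟨j1.val, by omega⟩ : Fin (2*n)) ∈ alphaN n 2 := by
        rw [ht]; exact hj1
      have hsub1 : (⟨j1, hj1⟩ : {x // x ∈ alphaN n 2})
          = ⟨t0 (⟨j1.val, by omega⟩ : Fin (2*n)), hjm⟩ := by
        apply Subtype.ext
        exact ht.symm
      revert b
      rw [hsub1]
      intro b
      have key := hFZ3 ⟨cc n 2, by omega⟩ i0mem ⟨j1.val, by omega⟩ hjF b hjm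
      have hzmem : (Pi.mulSingle (⟨cc n 2, by omega⟩ : Fin (2*n))
            (s (t0 (⟨j1.val, by omega⟩ : Fin (2*n))) ⟨cc n 2, by omega⟩ b) *
          Pi.mulSingle (idx hn0 ((⟨j1.val, by omega⟩ : Fin (2*n)).val - cc n 2))
            (s (t0 (⟨j1.val, by omega⟩ : Fin (2*n)))
              (idx hn0 ((⟨j1.val, by omega⟩ : Fin (2*n)).val - cc n 2)) b⁻¹)) ∈ SS := by
        rw [hSSmem]
        exact ⟨⟨cc n 2, by omega⟩, i0mem, Or.inr ⟨⟨j1.val, by omega⟩, hjF, ⟨b, rfl⟩⟩⟩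
      have h1 : ((Pi.mulSingle (⟨t0 (⟨j1.val, by omega⟩ : Fin (2*n)), hjm⟩ :
            {x // x ∈ alphaN n 2}) b,
          Pi.mulSingle (⟨⟨cc n 2, by omega⟩, i0mem⟩ : {x // x ∈ alphaF n 2})
            (s (t0 (⟨j1.val, by omega⟩ : Fin (2*n))) ⟨cc n 2, by omega⟩ b)) :
          (∀ j' : {x // x ∈ alphaN n 2}, A j'.1) × (∀ i' : {x // x ∈ alphaF n 2}, G i'.1))
          ∈ Subgroup.closure (F '' SS) := by
        rw [← key]
        exact Subgroup.subset_closure ⟨_, hzmem, rfl⟩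
      have h3 := mul_mem h1 (inv_mem (hC1 _ i0mem
        (s (t0 (⟨j1.val, by omega⟩ : Fin (2*n))) ⟨cc n 2, by omega⟩ b)))
      simpa only [Prod.inv_mk, Prod.mk_mul_mk, inv_one, mul_one, mul_inv_cancel] using h3
    have hg' : (((1 : ∀ j' : {x // x ∈ alphaN n 2}, A j'.1), g) :
        (∀ j' : {x // x ∈ alphaN n 2}, A j'.1) × (∀ i' : {x // x ∈ alphaF n 2}, G i'.1))
        ∈ Subgroup.closure (F '' SS) := by
      have hinr : (((1 : ∀ j' : {x // x ∈ alphaN n 2}, A j'.1), g) :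
          (∀ j' : {x // x ∈ alphaN n 2}, A j'.1) × (∀ i' : {x // x ∈ alphaF n 2}, G i'.1))
          = MonoidHom.inr _ _ g := rfl
      rw [hinr, ← Finset.noncommProd_mulSingle g]
      erw [Finset.map_noncommProd]
      refine Subgroup.noncommProd_mem _ _ ?_
      intro i' _
      exact hC1 i'.1 i'.2 (g i')
    have ha' : ((a, (1 : ∀ i' : {x // x ∈ alphaF n 2}, G i'.1)) :
        (∀ j' : {x // x ∈ alphaN n 2}, A j'.1) × (∀ i' : {x // x ∈ alphaF n 2}, G i'.1))
        ∈ Subgroup.closure (F '' SS) := by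
      have hinl : ((a, (1 : ∀ i' : {x // x ∈ alphaF n 2}, G i'.1)) :
          (∀ j' : {x // x ∈ alphaN n 2}, A j'.1) × (∀ i' : {x // x ∈ alphaF n 2}, G i'.1))
          = MonoidHom.inl _ _ a := rfl
      rw [hinl, ← Finset.noncommProd_mulSingle a]
      erw [Finset.map_noncommProd]
      refine Subgroup.noncommProd_mem _ _ ?_
      intro j' _
      exact hC2 j' (a j')
    have hsplit : ((a, g) :
        (∀ j' : {x // x ∈ alphaN n 2}, A j'.1) × (∀ i' : {x // x ∈ alphaF n 2}, G i'.1))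
        = (a, 1) * (1, g) := by
      rw [Prod.mk_mul_mk, mul_one, one_mul]
    rw [hsplit]
    exact mul_mem ha' hg'
  -- assembly
  refine ⟨MulEquiv.ofBijective (F.comp (Subgroup.closure SS).subtype) ⟨?_, ?_⟩⟩
  · rw [injective_iff_map_eq_one]
    rintro ⟨g, hg⟩ h1
    exact Subtype.ext (hker g hg h1)
  · intro t
    have ht : t ∈ Subgroup.map F (Subgroup.closure SS) := by rw [hmap]; trivial
    obtain ⟨g, hg, hFg⟩ := ht
    exact ⟨⟨g, hg⟩, hFg⟩








end SB
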